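/- More generally, let A, B be maximal monotone on ℝ^d, α, β > 0, θ ≠ 0, and define for z ∈ ℝ^d: x₁ = J_{αA}(z), x₂ = J_{βB}((1 + β/α)x₁ − (β/α)z), T(z) = z + θ(x₂ − x₁). Then T(z*) = z* holds for some z* if and only if zer(A+B) ≠ ∅; moreover, at any fixed point z*, the common value x₁ = x₂ lies in zer(A+B). -/

import Mathlib

open RealInnerProductSpace Pointwise Filter

/-- A set-valued operator on `ℝ^d` is monotone. -/
def MonotoneOp {d : ℕ} (A : EuclideanSpace ℝ (Fin d) → Set (EuclideanSpace ℝ (Fin d))) : Prop :=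
  ∀ x y u v, u ∈ A x → v ∈ A y → 0 ≤ ⟪u - v, x - y⟫

/-- A set-valued operator on `ℝ^d` is maximal monotone. -/
def MaximalMonotone {d : ℕ} (A : EuclideanSpace ℝ (Fin d) → Set (EuclideanSpace ℝ (Fin d))) : Prop :=
  MonotoneOp A ∧ ∀ B, MonotoneOp B → (∀ x, A x ⊆ B x) → A = B

/-- `J` is the resolvent `(I + αA)⁻¹` of `A`: for every `z`, `z ∈ (I + αA)(J z)`. -/
def IsResolvent {d : ℕ} (α : ℝ) (A : EuclideanSpace ℝ (Fin d) → Set (EuclideanSpace ℝ (Fin d)))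
    (J : EuclideanSpace ℝ (Fin d) → EuclideanSpace ℝ (Fin d)) : Prop :=
  ∀ z, α⁻¹ • (z - J z) ∈ A (J z)

lemma resolvent_eq {d : ℕ} {α : ℝ} (hα : 0 < α)
    {A : EuclideanSpace ℝ (Fin d) → Set (EuclideanSpace ℝ (Fin d))}
    (hmono : MonotoneOp A) {J} (hJ : IsResolvent α A J)
    {z x u : EuclideanSpace ℝ (Fin d)} (hu : u ∈ A x) (hz : z = x + α • u) :
    J z = x := by
  have hα0 : α ≠ 0 := hα.ne'
  have h := hmono (J z) x (α⁻¹ • (z - J z)) u (hJ z) hu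
  have hkey : α⁻¹ • (z - J z) - u = -(α⁻¹ • (J z - x)) := by
    subst hz
    match_scalars <;> field_simp <;> ring
  rw [hkey, inner_neg_left, real_inner_smul_left, real_inner_self_eq_norm_sq] at h
  have hα' : 0 < α⁻¹ := by positivity
  have h2 : ‖J z - x‖ ^ 2 ≤ 0 := by nlinarith
  have h3 : ‖J z - x‖ ^ 2 = 0 := le_antisymm h2 (by positivity)
  have h4 : J z - x = 0 := by
    simpa using (pow_eq_zero_iff two_ne_zero).mp h3
  exact sub_eq_zero.mp h4

theorem general_two_param_splitting_encoding {d : ℕ}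
    (A B : EuclideanSpace ℝ (Fin d) → Set (EuclideanSpace ℝ (Fin d)))
    (hA : MaximalMonotone A) (hB : MaximalMonotone B)
    (α β θ : ℝ) (hα : 0 < α) (hβ : 0 < β) (hθ : θ ≠ 0)
    (JA JB : EuclideanSpace ℝ (Fin d) → EuclideanSpace ℝ (Fin d))
    (hJA : IsResolvent α A JA) (hJB : IsResolvent β B JB) :
    ((∃ z : EuclideanSpace ℝ (Fin d),
        z + θ • (JB ((1 + β / α) • JA z - (β / α) • z) - JA z) = z) ↔
      (∃ x : EuclideanSpace ℝ (Fin d), 0 ∈ A x + B x)) ∧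
    (∀ z : EuclideanSpace ℝ (Fin d),
      z + θ • (JB ((1 + β / α) • JA z - (β / α) • z) - JA z) = z →
        JA z = JB ((1 + β / α) • JA z - (β / α) • z) ∧ 0 ∈ A (JA z) + B (JA z)) := by
  have hα0 : α ≠ 0 := hα.ne'
  have hβ0 : β ≠ 0 := hβ.ne'
  -- main forward claim: every fixed point gives the conclusions
  have key : ∀ z : EuclideanSpace ℝ (Fin d),
      z + θ • (JB ((1 + β / α) • JA z - (β / α) • z) - JA z) = z →
        JA z = JB ((1 + β / α) • JA z - (β / α) • z) ∧ 0 ∈ A (JA z) + B (JA z) := by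
    intro z hz
    set w := (1 + β / α) • JA z - (β / α) • z with hw
    have hsub : θ • (JB w - JA z) = 0 := by
      have := hz
      abel_nf at this ⊢
      linear_combination (norm := abel_nf) this
    have heq : JA z = JB w := by
      rcases smul_eq_zero.mp hsub with h | h
      · exact absurd h hθ
      · exact (sub_eq_zero.mp h).symm
    refine ⟨heq, ?_⟩
    have hu : α⁻¹ • (z - JA z) ∈ A (JA z) := hJA z
    have hv : β⁻¹ • (w - JB w) ∈ B (JB w) := hJB w
    rw [← heq] at hv
    have hvu : β⁻¹ • (w - JA z) = -(α⁻¹ • (z - JA z)) := by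
      rw [hw]
      match_scalars <;> field_simp <;> ring
    rw [hvu] at hv
    rw [Set.mem_add]
    exact ⟨_, hu, _, hv, by abel⟩
  constructor
  · constructor
    · rintro ⟨z, hz⟩
      exact ⟨JA z, (key z hz).2⟩
    · rintro ⟨x, hx⟩
      rw [Set.mem_add] at hx
      obtain ⟨u, hu, v, hv, huv⟩ := hx
      have hvu : v = -u := eq_neg_of_add_eq_zero_right huv
      set z := x + α • u with hzdef
      have hJAz : JA z = x := resolvent_eq hα hA.1 hJA hu rfl
      have hwx : (1 + β / α) • JA z - (β / α) • z = x + β • v := by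
        rw [hJAz, hzdef, hvu]
        match_scalars <;> field_simp <;> ring
      have hJBw : JB ((1 + β / α) • JA z - (β / α) • z) = x := by
        rw [hwx]
        exact resolvent_eq hβ hB.1 hJB hv rfl
      exact ⟨z, by rw [hJBw, hJAz]; simp⟩
  · exact key
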